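/- Let (A,(p_l)) be a self-induced Fréchet algebra and let n ∈ ℕ. If A is 2n-weakly amenable, then the unitization A# is 2n-weakly amenable. -/

import Mathlib

noncomputable section

open Filter Topology

/-- A topological `ℂ`-module `X` equipped with left and right actions of `A`,
each acting by continuous linear maps on `X`.  This is the data underlying a
locally convex `A`-bimodule. -/
structure BiMod (A : Type) : Type 1 where
  X : Type
  [ag : AddCommGroup X]
  [md : Module ℂ X]
  [ts : TopologicalSpace X]
  l : A → X →L[ℂ] X
  r : A → X →L[ℂ] X

attribute [instance] BiMod.ag BiMod.md BiMod.ts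

namespace BiMod

variable {A : Type}

/-- The strong dual of a bimodule, with the canonical dual actions
`⟨a·f, x⟩ = ⟨f, x·a⟩` and `⟨f·a, x⟩ = ⟨f, a·x⟩`.  The dual carries the strong
topology (uniform convergence on von Neumann bounded sets), which is the default
topology on `X →L[ℂ] ℂ` in Mathlib. -/
def dual (M : BiMod A) : BiMod A where
  X := M.X →L[ℂ] ℂ
  l a := ContinuousLinearMap.precomp ℂ (M.r a)
  r a := ContinuousLinearMap.precomp ℂ (M.l a)

/-- The `n`-th iterated strong dual of a bimodule (`iterDual M 0 = M`). -/
def iterDual (M : BiMod A) : ℕ → BiMod A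
  | 0 => M
  | n + 1 => (M.iterDual n).dual

instance dualCSM (M : BiMod A) : ContinuousSMul ℂ (M.dual).X :=
  inferInstanceAs (ContinuousSMul ℂ (M.X →L[ℂ] ℂ))

/-- Evaluation (canonical) embedding of a bimodule into its double dual. -/
def evalEmbed (M : BiMod A) [ContinuousSMul ℂ M.X] (x : M.X) : M.dual.dual.X :=
  show (M.X →L[ℂ] ℂ) →L[ℂ] ℂ from
    ⟨⟨⟨fun f => f x, fun _ _ => rfl⟩, fun _ _ => rfl⟩, continuous_eval_const x⟩

/-- `ContinuousSMul` holds at every level of the iterated dual. -/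
def iterCSM (M : BiMod A) (h : ContinuousSMul ℂ M.X) :
    ∀ n, ContinuousSMul ℂ (M.iterDual n).X
  | 0 => h
  | n + 1 => inferInstanceAs (ContinuousSMul ℂ ((M.iterDual n).X →L[ℂ] ℂ))

/-- The canonical (iterated evaluation) embedding `M → M^(2n)`. -/
def iterEmbed (M : BiMod A) (h : ContinuousSMul ℂ M.X) :
    ∀ n : ℕ, M.X → (M.iterDual (2 * n)).X
  | 0, x => x
  | n + 1, x =>
    haveI := M.iterCSM h (2 * n)
    (M.iterDual (2 * n)).evalEmbed (M.iterEmbed h n x)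

/-- The pairing between the `(k+1)`-st dual and the `k`-th dual. -/
def pairApply (M : BiMod A) (k : ℕ) (F : (M.iterDual (k + 1)).X)
    (x : (M.iterDual k).X) : ℂ := (show (M.iterDual k).X →L[ℂ] ℂ from F) x

end BiMod

section Defs

variable (A : Type) [NonUnitalRing A] [Module ℂ A] [SMulCommClass ℂ A A] [IsScalarTower ℂ A A]
  [TopologicalSpace A] [IsTopologicalAddGroup A] [ContinuousSMul ℂ A] [ContinuousMul A]

/-- A continuous derivation from `A` into a bimodule. -/
def IsContDerivation (M : BiMod A) (D : A →L[ℂ] M.X) : Prop :=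
  ∀ a b : A, D (a * b) = M.l a (D b) + M.r b (D a)

/-- An inner derivation : `D a = a·x - x·a` for some `x`. -/
def IsInnerDerivation (M : BiMod A) (D : A →L[ℂ] M.X) : Prop :=
  ∃ x : M.X, ∀ a : A, D a = M.l a x - M.r a x

/-- `A` as a bimodule over itself, via left/right multiplication. -/
def selfBiMod : BiMod A where
  X := A
  l a := ⟨LinearMap.mulLeft ℂ a, continuous_mul_left a⟩
  r a := ⟨LinearMap.mulRight ℂ a, continuous_mul_right a⟩

/-- `A` is `n`-weakly amenable if every continuous derivation from `A` into the
`n`-th iterated strong dual `A^(n)` (with the canonical module actions) is inner. -/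
def NWeaklyAmenable (n : ℕ) : Prop :=
  ∀ D : A →L[ℂ] ((selfBiMod A).iterDual n).X,
    IsContDerivation A ((selfBiMod A).iterDual n) D →
      IsInnerDerivation A ((selfBiMod A).iterDual n) D

/-- A closed two-sided ideal `I` of `A` (a closed `ℂ`-subalgebra which absorbs
multiplication on both sides) as an `A`-bimodule. -/
def idealBiMod (I : NonUnitalSubalgebra ℂ A)
    (hl : ∀ a : A, ∀ x ∈ I, a * x ∈ I) (hr : ∀ a : A, ∀ x ∈ I, x * a ∈ I) : BiMod A where
  X := ↥I
  l a := ⟨{ toFun := fun x => (⟨a * (x : A), hl a x x.2⟩ : ↥I)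
            map_add' := fun x y => by ext; simp [mul_add]
            map_smul' := fun c x => by ext; simp [mul_smul_comm] },
          (Continuous.subtype_mk ((continuous_mul_left a).comp continuous_subtype_val) _)⟩
  r a := ⟨{ toFun := fun x => (⟨(x : A) * a, hr a x x.2⟩ : ↥I)
            map_add' := fun x y => by ext; simp [add_mul]
            map_smul' := fun c x => by ext; simp [smul_mul_assoc] },
          (Continuous.subtype_mk ((continuous_mul_right a).comp continuous_subtype_val) _)⟩

/-- `A` is `n`-ideally amenable if for every closed two-sided ideal `I` of `A`,
every continuous derivation from `A` into `I^(n)` is inner. -/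
def NIdeallyAmenable (n : ℕ) : Prop :=
  ∀ (I : NonUnitalSubalgebra ℂ A), IsClosed (I : Set A) →
    ∀ (hl : ∀ a : A, ∀ x ∈ I, a * x ∈ I) (hr : ∀ a : A, ∀ x ∈ I, x * a ∈ I),
      ∀ D : A →L[ℂ] ((idealBiMod A I hl hr).iterDual n).X,
        IsContDerivation A ((idealBiMod A I hl hr).iterDual n) D →
          IsInnerDerivation A ((idealBiMod A I hl hr).iterDual n) D

/-- The topology of `A` is generated by an increasing sequence of submultiplicative
seminorms.  Together with completeness and Hausdorffness this says that `A` is a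
Fréchet algebra. -/
def FrechetSeminorms : Prop :=
  ∃ p : SeminormFamily ℂ A ℕ, WithSeminorms p ∧ (∀ n, p n ≤ p (n + 1)) ∧
    ∀ (n : ℕ) (x y : A), p n (x * y) ≤ p n x * p n y

/-- `A` has an identity element. -/
def HasIdentity : Prop := ∃ e : A, ∀ a : A, e * a = a ∧ a * e = a

end Defs

section Montel

variable (E : Type) [AddCommGroup E] [Module ℂ E] [TopologicalSpace E]

/-- A Montel space: a barrelled locally convex Hausdorff space in which every closed
(von Neumann) bounded subset is compact. -/
def IsMontelSpace : Prop :=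
  LocallyConvexSpace ℝ E ∧ T2Space E ∧ BarrelledSpace ℂ E ∧
    ∀ s : Set E, IsClosed s → Bornology.IsVonNBounded ℂ s → IsCompact s

end Montel

section More

variable (A : Type) [NonUnitalRing A] [Module ℂ A] [SMulCommClass ℂ A A] [IsScalarTower ℂ A A]
  [TopologicalSpace A] [IsTopologicalAddGroup A] [ContinuousSMul ℂ A] [ContinuousMul A]

/-- A bounded approximate identity: a bounded net `(e_i)` with `e_i * a → a` and
`a * e_i → a` for every `a`. -/
def HasBoundedApproxIdentity : Prop :=
  ∃ (ι : Type) (_ : Preorder ι) (_ : IsDirected ι (· ≤ ·)) (_ : Nonempty ι) (e : ι → A),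
    Bornology.IsVonNBounded ℂ (Set.range e) ∧
      ∀ a : A, Tendsto (fun i => e i * a) atTop (𝓝 a) ∧
        Tendsto (fun i => a * e i) atTop (𝓝 a)

/-- `A` is essential: the linear span of products is dense. -/
def IsEssential : Prop :=
  Dense ((Submodule.span ℂ {x : A | ∃ a b : A, x = a * b} : Submodule ℂ A) : Set A)

/-- `A` is self-induced: it is essential and every balanced bilinear functional
`φ` (i.e. `φ (a*c) b = φ a (c*b)`) is of the form `φ a b = f (a*b)` for some
continuous linear functional `f`. -/
def SelfInduced : Prop :=
  IsEssential A ∧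
    ∀ φ : A →ₗ[ℂ] A →ₗ[ℂ] ℂ, (∀ a b c : A, φ (a * c) b = φ a (c * b)) →
      ∃ f : A →L[ℂ] ℂ, ∀ a b : A, φ a b = f (a * b)

/-- The data of `M : BiMod A` constitutes a genuine locally convex `A`-bimodule:
the actions satisfy the bimodule laws, are `ℂ`-bilinear, jointly continuous, and
`M.X` is locally convex. -/
structure IsLCBimod (M : BiMod A) : Prop where
  lc : LocallyConvexSpace ℝ M.X
  l_mul : ∀ (a b : A) (x : M.X), M.l (a * b) x = M.l a (M.l b x)
  r_mul : ∀ (a b : A) (x : M.X), M.r (a * b) x = M.r b (M.r a x)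
  l_add : ∀ (a b : A) (x : M.X), M.l (a + b) x = M.l a x + M.l b x
  r_add : ∀ (a b : A) (x : M.X), M.r (a + b) x = M.r a x + M.r b x
  l_smul : ∀ (c : ℂ) (a : A) (x : M.X), M.l (c • a) x = c • M.l a x
  r_smul : ∀ (c : ℂ) (a : A) (x : M.X), M.r (c • a) x = c • M.r a x
  lr_comm : ∀ (a b : A) (x : M.X), M.l a (M.r b x) = M.r b (M.l a x)
  cont_l : Continuous fun q : A × M.X => M.l q.1 q.2
  cont_r : Continuous fun q : A × M.X => M.r q.1 q.2

/-- `A` is amenable: for every locally convex `A`-bimodule `X`, every continuous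
derivation from `A` into the strong dual `X*` (with the canonical dual actions)
is inner. -/
def Amenable : Prop :=
  ∀ M : BiMod A, IsLCBimod A M →
    ∀ D : A →L[ℂ] M.dual.X, IsContDerivation A M.dual D → IsInnerDerivation A M.dual D

end More

section UnitizationInstances

variable (A : Type) [NonUnitalRing A] [Module ℂ A] [SMulCommClass ℂ A A] [IsScalarTower ℂ A A]
  [TopologicalSpace A] [IsTopologicalAddGroup A] [ContinuousSMul ℂ A] [ContinuousMul A]

/-- The unitization `A# = ℂ ⊕ A` carries the product topology, which is the topology
generated by the seminorms `q_l (a, λ) = p_l a + |λ|`. -/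
instance : TopologicalSpace (Unitization ℂ A) :=
  TopologicalSpace.induced Unitization.toProd inferInstance

instance : IsTopologicalAddGroup (Unitization ℂ A) where
  continuous_add := by
    refine continuous_induced_rng.2 ?_
    show Continuous fun p : Unitization ℂ A × Unitization ℂ A => p.1.toProd + p.2.toProd
    exact (continuous_induced_dom.comp continuous_fst).add (continuous_induced_dom.comp continuous_snd)
  continuous_neg := by
    refine continuous_induced_rng.2 ?_
    show Continuous fun p : Unitization ℂ A => -p.toProd
    exact continuous_induced_dom.neg

instance : ContinuousSMul ℂ (Unitization ℂ A) where
  continuous_smul := by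
    refine continuous_induced_rng.2 ?_
    show Continuous fun p : ℂ × Unitization ℂ A => p.1 • p.2.toProd
    exact continuous_fst.smul (continuous_induced_dom.comp continuous_snd)

instance : ContinuousMul (Unitization ℂ A) where
  continuous_mul := by
    refine continuous_induced_rng.2 ?_
    have h : Continuous fun p : (ℂ × A) × ℂ × A =>
      ((p.1.1 * p.2.1, p.1.1 • p.2.2 + p.2.1 • p.1.2 + p.1.2 * p.2.2) : ℂ × A) := by fun_prop
    have hp : Continuous fun p : Unitization ℂ A × Unitization ℂ A => (p.1.toProd, p.2.toProd) :=
      (continuous_induced_dom.comp continuous_fst).prodMk (continuous_induced_dom.comp continuous_snd)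
    show Continuous fun p : Unitization ℂ A × Unitization ℂ A => (p.1 * p.2).toProd
    exact h.comp hp

end UnitizationInstances


/-! ### Auxiliary machinery -/

section StepDual

variable {X Y : Type} [AddCommGroup X] [Module ℂ X] [TopologicalSpace X]
  [AddCommGroup Y] [Module ℂ Y] [TopologicalSpace Y] [ContinuousSMul ℂ X]

/-- Evaluation at a point, as a continuous linear map on the strong dual. -/
def evalCLM (x : X) : (X →L[ℂ] ℂ) →L[ℂ] ℂ :=
  ⟨⟨⟨fun f => f x, fun _ _ => rfl⟩, fun _ _ => rfl⟩, continuous_eval_const x⟩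

@[simp] lemma evalCLM_apply (x : X) (f : X →L[ℂ] ℂ) : evalCLM x f = f x := rfl

/-- Forward map of the dual decomposition step. -/
def stepFwd (e : X ≃L[ℂ] Y × ℂ) : (X →L[ℂ] ℂ) →L[ℂ] (Y →L[ℂ] ℂ) × ℂ :=
  (ContinuousLinearMap.precomp ℂ
      ((e.symm : (Y × ℂ) →L[ℂ] X).comp (ContinuousLinearMap.inl ℂ Y ℂ))).prod
    (evalCLM (e.symm (0, 1)))

/-- Inverse map of the dual decomposition step. -/
def stepInv (e : X ≃L[ℂ] Y × ℂ) : ((Y →L[ℂ] ℂ) × ℂ) →L[ℂ] (X →L[ℂ] ℂ) :=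
  (ContinuousLinearMap.precomp ℂ
      ((ContinuousLinearMap.fst ℂ Y ℂ).comp (e : X →L[ℂ] Y × ℂ))).comp
    (ContinuousLinearMap.fst ℂ (Y →L[ℂ] ℂ) ℂ) +
  (ContinuousLinearMap.snd ℂ (Y →L[ℂ] ℂ) ℂ).smulRight
    ((ContinuousLinearMap.snd ℂ Y ℂ).comp (e : X →L[ℂ] Y × ℂ))

@[simp] lemma stepFwd_fst (e : X ≃L[ℂ] Y × ℂ) (f : X →L[ℂ] ℂ) (y : Y) :
    (stepFwd e f).1 y = f (e.symm (y, 0)) := rfl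

@[simp] lemma stepFwd_snd (e : X ≃L[ℂ] Y × ℂ) (f : X →L[ℂ] ℂ) :
    (stepFwd e f).2 = f (e.symm (0, 1)) := rfl

@[simp] lemma stepInv_apply (e : X ≃L[ℂ] Y × ℂ) (p : (Y →L[ℂ] ℂ) × ℂ) (x : X) :
    stepInv e p x = p.1 (e x).1 + (e x).2 * p.2 := by
  simp [stepInv, mul_comm]

/-- Decomposition of the strong dual: if `X ≃ Y × ℂ` then `X* ≃ Y* × ℂ`. -/
def stepDual (e : X ≃L[ℂ] Y × ℂ) : (X →L[ℂ] ℂ) ≃L[ℂ] (Y →L[ℂ] ℂ) × ℂ :=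
  ContinuousLinearEquiv.equivOfInverse (stepFwd e) (stepInv e)
    (fun f => by
      ext x
      have key : e.symm ((e x).1, 0) + (e x).2 • e.symm (0, 1) = x := by
        rw [← map_smul, ← map_add]
        have h2 : ((e x).1, (0:ℂ)) + (e x).2 • ((0:Y), (1:ℂ)) = e x := by
          simp [Prod.ext_iff]
        rw [h2, e.symm_apply_apply]
      rw [stepInv_apply, stepFwd_fst, stepFwd_snd, ← smul_eq_mul,
        ← map_smul f, ← map_add f, key])
    (fun p => by
      refine Prod.ext ?_ ?_
      · ext y; rw [stepFwd_fst, stepInv_apply]; simp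
      · rw [stepFwd_snd, stepInv_apply]; simp)

@[simp] lemma stepDual_fst (e : X ≃L[ℂ] Y × ℂ) (f : X →L[ℂ] ℂ) (y : Y) :
    (stepDual e f).1 y = f (e.symm (y, 0)) := rfl

@[simp] lemma stepDual_snd (e : X ≃L[ℂ] Y × ℂ) (f : X →L[ℂ] ℂ) :
    (stepDual e f).2 = f (e.symm (0, 1)) := rfl

end StepDual

namespace WA2N

variable (A : Type) [NonUnitalRing A] [Module ℂ A] [SMulCommClass ℂ A A] [IsScalarTower ℂ A A]
  [TopologicalSpace A] [IsTopologicalAddGroup A] [ContinuousSMul ℂ A] [ContinuousMul A]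

/-- The iterated dual of the unitization, as a bimodule over the unitization. -/
abbrev NB (k : ℕ) : BiMod (Unitization ℂ A) := (selfBiMod (Unitization ℂ A)).iterDual k

/-- The iterated dual of `A`, as a bimodule over `A`. -/
abbrev PB (k : ℕ) : BiMod A := (selfBiMod A).iterDual k

instance csmN (k : ℕ) : ContinuousSMul ℂ (NB A k).X :=
  (selfBiMod (Unitization ℂ A)).iterCSM
    (show ContinuousSMul ℂ (selfBiMod (Unitization ℂ A)).X from
      inferInstanceAs (ContinuousSMul ℂ (Unitization ℂ A))) k

instance csmP (k : ℕ) : ContinuousSMul ℂ (PB A k).X :=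
  (selfBiMod A).iterCSM
    (show ContinuousSMul ℂ (selfBiMod A).X from inferInstanceAs (ContinuousSMul ℂ A)) k

/-- Abbreviation for the pairing on the unitization side. -/
abbrev paN (k : ℕ) (f : (NB A (k + 1)).X) (x : (NB A k).X) : ℂ :=
  (selfBiMod (Unitization ℂ A)).pairApply k f x

/-- Abbreviation for the pairing on the `A` side. -/
abbrev paP (k : ℕ) (f : (PB A (k + 1)).X) (x : (PB A k).X) : ℂ :=
  (selfBiMod A).pairApply k f x

variable {A}

lemma paN_l (k : ℕ) (u : Unitization ℂ A) (f : (NB A (k + 1)).X) (x : (NB A k).X) :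
    paN A k ((NB A (k + 1)).l u f) x = paN A k f ((NB A k).r u x) := rfl

lemma paN_r (k : ℕ) (u : Unitization ℂ A) (f : (NB A (k + 1)).X) (x : (NB A k).X) :
    paN A k ((NB A (k + 1)).r u f) x = paN A k f ((NB A k).l u x) := rfl

lemma paP_l (k : ℕ) (a : A) (f : (PB A (k + 1)).X) (x : (PB A k).X) :
    paP A k ((PB A (k + 1)).l a f) x = paP A k f ((PB A k).r a x) := rfl

lemma paP_r (k : ℕ) (a : A) (f : (PB A (k + 1)).X) (x : (PB A k).X) :
    paP A k ((PB A (k + 1)).r a f) x = paP A k f ((PB A k).l a x) := rfl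

lemma paN_ext (k : ℕ) {f g : (NB A (k + 1)).X} (h : ∀ x, paN A k f x = paN A k g x) :
    f = g := ContinuousLinearMap.ext h

lemma paP_ext (k : ℕ) {f g : (PB A (k + 1)).X} (h : ∀ x, paP A k f x = paP A k g x) :
    f = g := ContinuousLinearMap.ext h

lemma paN_point_add (k : ℕ) (f : (NB A (k + 1)).X) (x y : (NB A k).X) :
    paN A k f (x + y) = paN A k f x + paN A k f y :=
  map_add (show (NB A k).X →L[ℂ] ℂ from f) x y

lemma paN_point_smul (k : ℕ) (f : (NB A (k + 1)).X) (c : ℂ) (x : (NB A k).X) :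
    paN A k f (c • x) = c * paN A k f x :=
  map_smul (show (NB A k).X →L[ℂ] ℂ from f) c x

lemma paN_point_zero (k : ℕ) (f : (NB A (k + 1)).X) : paN A k f 0 = 0 :=
  map_zero (show (NB A k).X →L[ℂ] ℂ from f)

lemma paP_add (k : ℕ) (f g : (PB A (k + 1)).X) (x : (PB A k).X) :
    paP A k (f + g) x = paP A k f x + paP A k g x := rfl

lemma paP_smul (k : ℕ) (c : ℂ) (f : (PB A (k + 1)).X) (x : (PB A k).X) :
    paP A k (c • f) x = c * paP A k f x := rfl

variable (A)

/-- The base equivalence `A# ≃ A × ℂ`. -/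
def e0 : Unitization ℂ A ≃L[ℂ] A × ℂ :=
  { toFun := fun u => (u.snd, u.fst)
    invFun := fun p => Unitization.inl p.2 + Unitization.inr p.1
    map_add' := fun u v => by simp [Prod.ext_iff]
    map_smul' := fun c u => by simp [Prod.ext_iff]
    left_inv := fun u => by
      refine Unitization.ext ?_ ?_ <;> simp
    right_inv := fun p => by
      refine Prod.ext ?_ ?_ <;> simp
    continuous_toFun := by
      exact (continuous_snd.prodMk continuous_fst :
        Continuous fun u : ℂ × A => (u.2, u.1)).comp (continuous_induced_dom (f := Unitization.toProd))
    continuous_invFun := by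
      have base : Continuous fun p : A × ℂ => (Unitization.mk (p.2, p.1)) :=
        continuous_induced_rng.2 (continuous_snd.prodMk continuous_fst :
          Continuous fun p : A × ℂ => ((p.2, p.1) : ℂ × A))
      exact base.congr fun p => (Unitization.ext
        (by rw [Unitization.fst_add, Unitization.fst_inl, Unitization.fst_inr, add_zero])
        (by rw [Unitization.snd_add, Unitization.snd_inl, Unitization.snd_inr, zero_add]) :
        (Unitization.mk (p.2, p.1)) = Unitization.inl p.2 + Unitization.inr p.1) }

/-- The inductively defined decomposition `(A#)^(k) ≃ A^(k) × ℂ`. -/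
def eqv : ∀ k : ℕ, (NB A k).X ≃L[ℂ] (PB A k).X × ℂ
  | 0 => e0 A
  | k + 1 => stepDual (eqv k)

lemma eqv_zero (u : Unitization ℂ A) : eqv A 0 u = (u.snd, u.fst) := rfl

lemma eqv_succ_fst (k : ℕ) (f : (NB A (k + 1)).X) (y : (PB A k).X) :
    paP A k (eqv A (k + 1) f).1 y = paN A k f ((eqv A k).symm (y, 0)) := rfl

lemma eqv_succ_snd (k : ℕ) (f : (NB A (k + 1)).X) :
    (eqv A (k + 1) f).2 = paN A k f ((eqv A k).symm (0, 1)) := rfl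

lemma pa_symm (k : ℕ) (F : (NB A (k + 1)).X) (y : (PB A k).X) (c : ℂ) :
    paN A k F ((eqv A k).symm (y, c))
      = paP A k (eqv A (k + 1) F).1 y + c * (eqv A (k + 1) F).2 := by
  have hsplit : (eqv A k).symm (y, c)
      = (eqv A k).symm (y, 0) + c • (eqv A k).symm (0, 1) := by
    rw [← map_smul, ← map_add]
    congr 1
    simp [Prod.ext_iff]
  rw [hsplit, paN_point_add, paN_point_smul, eqv_succ_fst, eqv_succ_snd]

/-- Actions of the unit of `A#` on the iterated duals are trivial. -/
lemma N_one : ∀ k : ℕ, (∀ x : (NB A k).X, (NB A k).l 1 x = x) ∧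
    (∀ x : (NB A k).X, (NB A k).r 1 x = x)
  | 0 => ⟨fun (x : Unitization ℂ A) => one_mul x, fun (x : Unitization ℂ A) => mul_one x⟩
  | k + 1 => by
    obtain ⟨ihl, ihr⟩ := N_one k
    constructor
    · intro f
      refine paN_ext k fun x => ?_
      rw [paN_l, ihr x]
    · intro f
      refine paN_ext k fun x => ?_
      rw [paN_r, ihl x]

/-- Actions on the iterated duals are additive in the algebra element. -/
lemma N_add : ∀ k : ℕ, (∀ (u v : Unitization ℂ A) (x : (NB A k).X),
      (NB A k).l (u + v) x = (NB A k).l u x + (NB A k).l v x) ∧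
    (∀ (u v : Unitization ℂ A) (x : (NB A k).X),
      (NB A k).r (u + v) x = (NB A k).r u x + (NB A k).r v x)
  | 0 => ⟨fun u v (x : Unitization ℂ A) => add_mul u v x,
      fun u v (x : Unitization ℂ A) => mul_add x u v⟩
  | k + 1 => by
    obtain ⟨ihl, ihr⟩ := N_add k
    constructor
    · intro u v f
      refine paN_ext k fun x => ?_
      rw [paN_l, ihr u v x, paN_point_add]
      rfl
    · intro u v f
      refine paN_ext k fun x => ?_
      rw [paN_r, ihl u v x, paN_point_add]
      rfl

/-- Actions on the iterated duals are `ℂ`-homogeneous in the algebra element. -/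
lemma N_smul : ∀ k : ℕ, (∀ (c : ℂ) (u : Unitization ℂ A) (x : (NB A k).X),
      (NB A k).l (c • u) x = c • (NB A k).l u x) ∧
    (∀ (c : ℂ) (u : Unitization ℂ A) (x : (NB A k).X),
      (NB A k).r (c • u) x = c • (NB A k).r u x)
  | 0 => ⟨fun c u (x : Unitization ℂ A) => smul_mul_assoc c u x,
      fun c u (x : Unitization ℂ A) => mul_smul_comm c x u⟩
  | k + 1 => by
    obtain ⟨ihl, ihr⟩ := N_smul k
    constructor
    · intro c u f
      refine paN_ext k fun x => ?_
      rw [paN_l, ihr c u x, paN_point_smul]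
      rfl
    · intro c u f
      refine paN_ext k fun x => ?_
      rw [paN_r, ihl c u x, paN_point_smul]
      rfl

/-- The canonical embedding of `A` into its `2m`-th dual. -/
def kap (m : ℕ) : A → (PB A (2 * m)).X :=
  (selfBiMod A).iterEmbed
    (show ContinuousSMul ℂ (selfBiMod A).X from inferInstanceAs (ContinuousSMul ℂ A)) m

/-- The even-level decomposition statement. -/
def EvenStmt (k : ℕ) (κ : A → (PB A k).X) : Prop :=
  ∀ (a : A) (x : (NB A k).X),
    eqv A k ((NB A k).l (Unitization.inr a) x)
      = ((PB A k).l a (eqv A k x).1 + (eqv A k x).2 • κ a, 0) ∧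
    eqv A k ((NB A k).r (Unitization.inr a) x)
      = ((PB A k).r a (eqv A k x).1 + (eqv A k x).2 • κ a, 0)

/-- The odd-level decomposition statement. -/
def OddStmt (k : ℕ) (κ : A → (PB A k).X) : Prop :=
  ∀ (a : A) (f : (NB A (k + 1)).X),
    eqv A (k + 1) ((NB A (k + 1)).l (Unitization.inr a) f)
      = ((PB A (k + 1)).l a (eqv A (k + 1) f).1, paP A k (eqv A (k + 1) f).1 (κ a)) ∧
    eqv A (k + 1) ((NB A (k + 1)).r (Unitization.inr a) f)
      = ((PB A (k + 1)).r a (eqv A (k + 1) f).1, paP A k (eqv A (k + 1) f).1 (κ a))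

lemma symm_of_eqv_eq {k : ℕ} {x : (NB A k).X} {p : (PB A k).X × ℂ}
    (h : eqv A k x = p) : x = (eqv A k).symm p := by
  rw [← h, ContinuousLinearEquiv.symm_apply_apply]

lemma step1 (k : ℕ) (κ : A → (PB A k).X) (he : EvenStmt A k κ) : OddStmt A k κ := by
  intro a f
  have hsy : ∀ y : (PB A k).X, eqv A k ((eqv A k).symm (y, 0)) = (y, 0) :=
    fun y => (eqv A k).apply_symm_apply _
  have h01 : eqv A k ((eqv A k).symm (0, 1)) = ((0 : (PB A k).X), (1 : ℂ)) :=
    (eqv A k).apply_symm_apply _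
  constructor
  · refine Prod.ext ?_ ?_
    · refine paP_ext k fun y => ?_
      rw [eqv_succ_fst, paN_l]
      have hr := (he a ((eqv A k).symm (y, 0))).2
      rw [hsy y] at hr
      simp only [zero_smul, add_zero] at hr
      rw [symm_of_eqv_eq A hr, ← eqv_succ_fst, ← paP_l]
    · rw [eqv_succ_snd, paN_l]
      have hr := (he a ((eqv A k).symm (0, 1))).2
      rw [h01] at hr
      simp only [one_smul, map_zero, zero_add] at hr
      rw [symm_of_eqv_eq A hr, ← eqv_succ_fst]
  · refine Prod.ext ?_ ?_
    · refine paP_ext k fun y => ?_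
      rw [eqv_succ_fst, paN_r]
      have hl := (he a ((eqv A k).symm (y, 0))).1
      rw [hsy y] at hl
      simp only [zero_smul, add_zero] at hl
      rw [symm_of_eqv_eq A hl, ← eqv_succ_fst, ← paP_r]
    · rw [eqv_succ_snd, paN_r]
      have hl := (he a ((eqv A k).symm (0, 1))).1
      rw [h01] at hl
      simp only [one_smul, map_zero, zero_add] at hl
      rw [symm_of_eqv_eq A hl, ← eqv_succ_fst]

lemma step2 (k : ℕ) (κ : A → (PB A k).X) (ho : OddStmt A k κ) :
    EvenStmt A (k + 1 + 1) (fun a => (PB A k).evalEmbed (κ a)) := by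
  intro a F
  have hsy : ∀ y : (PB A (k + 1)).X, eqv A (k + 1) ((eqv A (k + 1)).symm (y, 0)) = (y, 0) :=
    fun y => (eqv A (k + 1)).apply_symm_apply _
  have h01 : eqv A (k + 1) ((eqv A (k + 1)).symm (0, 1))
      = ((0 : (PB A (k + 1)).X), (1 : ℂ)) := (eqv A (k + 1)).apply_symm_apply _
  have heval : ∀ (a : A) (y : (PB A (k + 1)).X),
      paP A (k + 1) ((PB A k).evalEmbed (κ a)) y = paP A k y (κ a) := fun _ _ => rfl
  constructor
  · refine Prod.ext ?_ ?_
    · refine paP_ext (k + 1) fun y => ?_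
      rw [eqv_succ_fst, paN_l]
      have hr := (ho a ((eqv A (k + 1)).symm (y, 0))).2
      rw [hsy y] at hr
      have h0 : paP A k (((y : (PB A (k+1)).X), (0:ℂ)).1) (κ a) = paP A k y (κ a) := rfl
      rw [symm_of_eqv_eq A hr, pa_symm]
      simp only [paP_add, paP_smul, paP_l, heval]
      rw [mul_comm]; rfl
    · rw [eqv_succ_snd, paN_l]
      have hr := (ho a ((eqv A (k + 1)).symm (0, 1))).2
      rw [h01] at hr
      have hz : ((PB A (k + 1)).r a (0 : (PB A (k + 1)).X), paP A k (0 : (PB A (k+1)).X) (κ a))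
          = ((0 : (PB A (k + 1)).X), (0 : ℂ)) := by
        refine Prod.ext ?_ ?_
        · exact map_zero _
        · exact map_zero (show (PB A k).X →L[ℂ] ℂ from (0 : (PB A (k+1)).X)) ▸ rfl
      rw [hz] at hr
      have h0 : (eqv A (k + 1)).symm ((0 : (PB A (k + 1)).X), (0 : ℂ)) = 0 := by
        simpa using (map_zero (eqv A (k + 1)).symm)
      rw [symm_of_eqv_eq A hr, h0, paN_point_zero]
  · refine Prod.ext ?_ ?_
    · refine paP_ext (k + 1) fun y => ?_
      rw [eqv_succ_fst, paN_r]
      have hl := (ho a ((eqv A (k + 1)).symm (y, 0))).1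
      rw [hsy y] at hl
      rw [symm_of_eqv_eq A hl, pa_symm]
      simp only [paP_add, paP_smul, paP_r, heval]
      rw [mul_comm]; rfl
    · rw [eqv_succ_snd, paN_r]
      have hl := (ho a ((eqv A (k + 1)).symm (0, 1))).1
      rw [h01] at hl
      have hz : ((PB A (k + 1)).l a (0 : (PB A (k + 1)).X), paP A k (0 : (PB A (k+1)).X) (κ a))
          = ((0 : (PB A (k + 1)).X), (0 : ℂ)) := by
        refine Prod.ext ?_ ?_
        · exact map_zero _
        · exact map_zero (show (PB A k).X →L[ℂ] ℂ from (0 : (PB A (k+1)).X)) ▸ rfl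
      rw [hz] at hl
      have h0 : (eqv A (k + 1)).symm ((0 : (PB A (k + 1)).X), (0 : ℂ)) = 0 := by
        simpa using (map_zero (eqv A (k + 1)).symm)
      rw [symm_of_eqv_eq A hl, h0, paN_point_zero]

lemma evenZero_aux (a : A) (u : Unitization ℂ A) :
    eqv A 0 ((NB A 0).l (Unitization.inr a) u)
      = ((PB A 0).l a (eqv A 0 u).1 + (eqv A 0 u).2 • kap A 0 a, 0) ∧
    eqv A 0 ((NB A 0).r (Unitization.inr a) u)
      = ((PB A 0).r a (eqv A 0 u).1 + (eqv A 0 u).2 • kap A 0 a, 0) := by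
  constructor
  · refine Prod.ext ?_ ?_
    · show (Unitization.inr a * u).snd = a * u.snd + u.fst • a
      rw [Unitization.snd_mul]
      simp [add_comm]
    · show ((Unitization.inr a : Unitization ℂ A) * u).fst = (0 : ℂ)
      rw [Unitization.fst_mul]
      simp
  · refine Prod.ext ?_ ?_
    · show (u * Unitization.inr a).snd = u.snd * a + u.fst • a
      rw [Unitization.snd_mul]
      simp [add_comm]
    · show (u * (Unitization.inr a : Unitization ℂ A)).fst = (0 : ℂ)
      rw [Unitization.fst_mul]
      simp

lemma evenZero : EvenStmt A 0 (kap A 0) := fun a x => evenZero_aux A a x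

lemma evenAll : ∀ m : ℕ, EvenStmt A (2 * m) (kap A m)
  | 0 => evenZero A
  | m + 1 => step2 A (2 * m) (kap A m) (step1 A (2 * m) (kap A m) (evenAll m))



/-- `inr : A → A#` as a continuous linear map. -/
def inrL : A →L[ℂ] Unitization ℂ A :=
  ⟨{ toFun := Unitization.inr
     map_add' := fun a b => (Unitization.inr_add ℂ a b).symm ▸ rfl
     map_smul' := fun c a => Unitization.inr_smul ℂ c a },
   continuous_induced_rng.2 (continuous_const.prodMk continuous_id :
     Continuous fun a : A => ((0, a) : ℂ × A))⟩

@[simp] lemma inrL_apply (a : A) : inrL A a = Unitization.inr a := rfl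

end WA2N

/-- If a self-induced Fréchet algebra `A` is `2n`-weakly amenable, then its
unitization `A#` is `2n`-weakly amenable. -/
theorem unitization_even_weaklyAmenable_of_selfInduced (A : Type) [NonUnitalRing A] [Module ℂ A] [SMulCommClass ℂ A A]
    [IsScalarTower ℂ A A] [UniformSpace A] [IsUniformAddGroup A] [ContinuousSMul ℂ A]
    [ContinuousMul A] [CompleteSpace A] [T2Space A] (hA : FrechetSeminorms A)
    (hself : SelfInduced A) (n : ℕ)
    (h : NWeaklyAmenable A (2 * n)) : NWeaklyAmenable (Unitization ℂ A) (2 * n) := by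
  intro D hD
  set E := WA2N.eqv A (2 * n) with hEdef
  set κ := WA2N.kap A n with hκdef
  let D' : A →L[ℂ] ((selfBiMod A).iterDual (2 * n)).X :=
    (ContinuousLinearMap.fst ℂ _ ℂ).comp
      ((E : (WA2N.NB A (2 * n)).X →L[ℂ] (WA2N.PB A (2 * n)).X × ℂ).comp
        (D.comp (WA2N.inrL A)))
  let d : A →L[ℂ] ℂ :=
    (ContinuousLinearMap.snd ℂ _ ℂ).comp
      ((E : (WA2N.NB A (2 * n)).X →L[ℂ] (WA2N.PB A (2 * n)).X × ℂ).comp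
        (D.comp (WA2N.inrL A)))
  have hD'1 : ∀ a : A, D' a = (E (D (Unitization.inr a))).1 := fun a => rfl
  have hd1 : ∀ a : A, d a = (E (D (Unitization.inr a))).2 := fun a => rfl
  have hEv := WA2N.evenAll A n
  -- the key identity coming from the derivation property on `A`
  have key : ∀ a b : A, E (D (Unitization.inr (a * b)))
      = ((WA2N.PB A (2 * n)).l a (E (D (Unitization.inr b))).1
          + (E (D (Unitization.inr b))).2 • κ a, 0)
        + ((WA2N.PB A (2 * n)).r b (E (D (Unitization.inr a))).1
          + (E (D (Unitization.inr a))).2 • κ b, 0) := by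
    intro a b
    have h1 := hD (Unitization.inr a) (Unitization.inr b)
    rw [← Unitization.inr_mul] at h1
    have h2 := congrArg E h1
    rw [map_add] at h2
    rw [(hEv a (D (Unitization.inr b))).1, (hEv b (D (Unitization.inr a))).2] at h2
    exact h2
  have hd0 : ∀ a b : A, d (a * b) = 0 := by
    intro a b
    have h2 := congrArg Prod.snd (key a b)
    rw [hd1]
    simpa using h2
  -- `d` vanishes by essentiality
  have hdzero : ∀ x : A, d x = 0 := by
    have hsub : ((Submodule.span ℂ {x : A | ∃ a b : A, x = a * b} : Submodule ℂ A) : Set A)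
        ⊆ {x : A | d x = 0} := by
      intro x hx
      have hle : Submodule.span ℂ {x : A | ∃ a b : A, x = a * b}
          ≤ LinearMap.ker (d : A →ₗ[ℂ] ℂ) := by
        rw [Submodule.span_le]
        rintro y ⟨a, b, rfl⟩
        exact LinearMap.mem_ker.mpr (hd0 a b)
      exact hle hx
    intro x
    have hx : x ∈ closure
        ((Submodule.span ℂ {x : A | ∃ a b : A, x = a * b} : Submodule ℂ A) : Set A) := by
      rw [hself.1.closure_eq]; trivial
    exact closure_minimal hsub (isClosed_eq d.continuous continuous_const) hx
  -- `D'` is a continuous derivation into `A^(2n)`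
  have hder : IsContDerivation A ((selfBiMod A).iterDual (2 * n)) D' := by
    intro a b
    have h2 := congrArg Prod.fst (key a b)
    rw [← hD'1, ← hD'1, ← hD'1, ← hd1, ← hd1, hdzero a, hdzero b] at h2
    simpa using h2
  obtain ⟨F, hF⟩ := h D' hder
  refine ⟨E.symm (F, 0), fun u => ?_⟩
  have hEsymm : E (E.symm (F, 0)) = (F, 0) := E.apply_symm_apply _
  -- innerness on elements of `A`
  have hinr : ∀ a : A, D (Unitization.inr a)
      = (WA2N.NB A (2 * n)).l (Unitization.inr a) (E.symm (F, 0)) - (WA2N.NB A (2 * n)).r (Unitization.inr a) (E.symm (F, 0)) := by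
    intro a
    apply E.injective
    rw [map_sub, (hEv a (E.symm (F, 0))).1, (hEv a (E.symm (F, 0))).2, hEsymm]
    have hEDa : E (D (Unitization.inr a)) = (D' a, d a) :=
      Prod.ext (hD'1 a).symm (hd1 a).symm
    rw [hEDa, hF a, hdzero a]
    refine Prod.ext ?_ ?_ <;> simp
  -- `D` kills the identity
  have hD1 : D (1 : Unitization ℂ A) = 0 := by
    have h11 := hD 1 1
    rw [mul_one, (WA2N.N_one A (2 * n)).1 (D 1), (WA2N.N_one A (2 * n)).2 (D 1)] at h11
    exact left_eq_add.mp h11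
  -- assemble
  have hu : (Unitization.inl u.fst : Unitization ℂ A) + Unitization.inr u.snd = u :=
    Unitization.inl_fst_add_inr_snd_eq u
  have hinl : (Unitization.inl u.fst : Unitization ℂ A) = u.fst • 1 := by
    refine Unitization.ext ?_ ?_ <;> simp
  calc D u = D (Unitization.inl u.fst + Unitization.inr u.snd) := by rw [hu]
    _ = u.fst • D 1 + D (Unitization.inr u.snd) := by rw [map_add, hinl, map_smul]
    _ = D (Unitization.inr u.snd) := by rw [hD1, smul_zero, zero_add]
    _ = (WA2N.NB A (2 * n)).l (Unitization.inr u.snd) (E.symm (F, 0))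
        - (WA2N.NB A (2 * n)).r (Unitization.inr u.snd) (E.symm (F, 0)) := hinr u.snd
    _ = (WA2N.NB A (2 * n)).l u (E.symm (F, 0)) - (WA2N.NB A (2 * n)).r u (E.symm (F, 0)) := by
        conv_rhs => rw [← hu, hinl]
        rw [(WA2N.N_add A (2 * n)).1, (WA2N.N_add A (2 * n)).2,
          (WA2N.N_smul A (2 * n)).1, (WA2N.N_smul A (2 * n)).2,
          (WA2N.N_one A (2 * n)).1, (WA2N.N_one A (2 * n)).2]
        abel
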